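/- Fix reals A < B and let g: ℝ → ℝ be continuously differentiable with bounded derivative. Then for every integer j* ≥ 0 and every x ∈ (A, B], | g(x) − ( c_0(g) h_0(x) + ∑_{j=0}^{j*} ∑_{k=1}^{2^j} c_{j,k}(g) h_{j,k}(x) ) | ≤ (B − A) 2^{−j* − 2} ‖g'‖_∞, where ‖g'‖_∞ = sup_x |g'(x)|. -/

import Mathlib

open MeasureTheory Real

/-- The dyadic grid points `s_{j,k} = A + k 2^{-j} (B - A)` on `[A, B]`. -/
noncomputable def haarPt (A B : ℝ) (j k : ℕ) : ℝ := A + k * (B - A) / 2 ^ j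

/-- The dyadic subinterval `I_{j,k} = (s_{j,k-1}, s_{j,k}]` of `[A, B]`. -/
noncomputable def haarI (A B : ℝ) (j k : ℕ) : Set ℝ :=
  Set.Ioc (haarPt A B j (k - 1)) (haarPt A B j k)

/-- The coarsest Haar basis function `h_0 = (B - A)^{-1/2} 1_{I_{0,1}}`. -/
noncomputable def haarH0 (A B : ℝ) (x : ℝ) : ℝ :=
  (Real.sqrt (B - A))⁻¹ * (haarI A B 0 1).indicator 1 x

/-- The Haar basis function
`h_{j,k} = (B - A)^{-1/2} 2^{j/2} (1_{I_{j+1,2k-1}} - 1_{I_{j+1,2k}})`. -/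
noncomputable def haarH (A B : ℝ) (j k : ℕ) (x : ℝ) : ℝ :=
  (Real.sqrt (B - A))⁻¹ * Real.sqrt (2 ^ j) *
    ((haarI A B (j + 1) (2 * k - 1)).indicator 1 x - (haarI A B (j + 1) (2 * k)).indicator 1 x)

/-- The zeroth Haar coefficient `c_0(g) = ∫_A^B g(t) h_0(t) dt`. -/
noncomputable def haarC0 (A B : ℝ) (g : ℝ → ℝ) : ℝ := ∫ t in A..B, g t * haarH0 A B t

/-- The Haar coefficient `c_{j,k}(g) = ∫_A^B g(t) h_{j,k}(t) dt`. -/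
noncomputable def haarC (A B : ℝ) (j k : ℕ) (g : ℝ → ℝ) : ℝ :=
  ∫ t in A..B, g t * haarH A B j k t

variable {A B : ℝ}

lemma haarPt_le (h : 0 < B - A) (j : ℕ) {k k' : ℕ} (hk : k ≤ k') :
    haarPt A B j k ≤ haarPt A B j k' := by
  have h2 : (0:ℝ) < (2:ℝ) ^ j := by positivity
  have hc : (k : ℝ) ≤ k' := by exact_mod_cast hk
  unfold haarPt
  have : (k:ℝ) * (B - A) / 2 ^ j ≤ k' * (B - A) / 2 ^ j := by
    apply div_le_div_of_nonneg_right ?_ h2.le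
    nlinarith
  linarith

lemma haarPt_zero (j : ℕ) : haarPt A B j 0 = A := by simp [haarPt]

lemma haarPt_top (j : ℕ) : haarPt A B j (2 ^ j) = B := by
  unfold haarPt
  have h2 : (0:ℝ) < (2:ℝ) ^ j := by positivity
  push_cast
  field_simp
  ring

lemma haarPt_double (j k : ℕ) : haarPt A B (j + 1) (2 * k) = haarPt A B j k := by
  unfold haarPt
  have h2 : (0:ℝ) < (2:ℝ) ^ j := by positivity
  push_cast
  ring_nf

lemma haarI_split (h : 0 < B - A) (j : ℕ) {k : ℕ} (hk : 1 ≤ k) :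
    haarI A B j k = haarI A B (j + 1) (2 * k - 1) ∪ haarI A B (j + 1) (2 * k) := by
  unfold haarI
  have h1 : 2 * k - 1 - 1 = 2 * (k - 1) := by omega
  rw [h1, haarPt_double, haarPt_double]
  rw [Set.Ioc_union_Ioc_eq_Ioc]
  · rw [← haarPt_double (A := A) (B := B) j (k-1)]
    exact haarPt_le h (j+1) (show 2*(k-1) ≤ 2*k-1 by omega)
  · rw [← haarPt_double (A := A) (B := B) j k]
    exact haarPt_le h (j+1) (show 2*k-1 ≤ 2*k by omega)

lemma haarI_unique (h : 0 < B - A) {j k k' : ℕ} (hk : 1 ≤ k) (hk' : 1 ≤ k') {x : ℝ}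
    (hx : x ∈ haarI A B j k) (hx' : x ∈ haarI A B j k') : k = k' := by
  by_contra hne
  rcases Nat.lt_or_ge k k' with hlt | hge
  · have hle : haarPt A B j k ≤ haarPt A B j (k' - 1) := haarPt_le h j (by omega)
    have := hx.2; have := hx'.1; linarith
  · have hle : haarPt A B j k' ≤ haarPt A B j (k - 1) := haarPt_le h j (by omega)
    have := hx'.2; have := hx.1; linarith

lemma haarI_zero_one : haarI A B 0 1 = Set.Ioc A B := by
  simp [haarI, haarPt]

lemma haarI_subset (h : 0 < B - A) {j k : ℕ} (hk2 : k ≤ 2 ^ j) :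
    haarI A B j k ⊆ Set.Ioc A B := by
  unfold haarI
  apply Set.Ioc_subset_Ioc
  · have := haarPt_le (A := A) (B := B) h j (Nat.zero_le (k-1))
    rwa [haarPt_zero] at this
  · have := haarPt_le (A := A) (B := B) h j hk2
    rwa [haarPt_top] at this

lemma haar_exists (h : 0 < B - A) {x : ℝ} (hx : x ∈ Set.Ioc A B) (j : ℕ) :
    ∃ k, 1 ≤ k ∧ k ≤ 2 ^ j ∧ x ∈ haarI A B j k := by
  induction j with
  | zero => exact ⟨1, le_rfl, le_rfl, by rwa [haarI_zero_one]⟩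
  | succ n ih =>
    obtain ⟨k, hk1, hk2, hxk⟩ := ih
    rw [haarI_split h n hk1] at hxk
    have hp : 2 ^ (n+1) = 2 * 2 ^ n := by ring
    rcases hxk with hl | hr
    · exact ⟨2 * k - 1, by omega, by omega, hl⟩
    · exact ⟨2 * k, by omega, by omega, hr⟩

variable {g : ℝ → ℝ}

-- new part
lemma measurableSet_haarI (j k : ℕ) : MeasurableSet (haarI A B j k) :=
  measurableSet_Ioc

lemma integral_over (hgc : Continuous g) (h : 0 < B - A) {j k : ℕ} (hk2 : k ≤ 2 ^ j) :
    ∫ t in Set.Ioc A B, (haarI A B j k).indicator g t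
      = ∫ t in haarPt A B j (k - 1)..haarPt A B j k, g t := by
  rw [MeasureTheory.setIntegral_indicator (measurableSet_haarI j k),
    Set.inter_eq_self_of_subset_right (haarI_subset h hk2),
    intervalIntegral.integral_of_le (haarPt_le h j (Nat.sub_le k 1))]
  rfl

lemma haarC0_eq (h : 0 < B - A) (hgc : Continuous g) :
    haarC0 A B g = (Real.sqrt (B - A))⁻¹ * ∫ t in A..B, g t := by
  unfold haarC0 haarH0
  rw [haarI_zero_one]
  have hrw : (fun t => g t * ((Real.sqrt (B - A))⁻¹ * (Set.Ioc A B).indicator 1 t))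
      = fun t => (Real.sqrt (B - A))⁻¹ * (Set.Ioc A B).indicator g t := by
    funext t; by_cases ht : t ∈ Set.Ioc A B <;> simp [ht, mul_comm]
  show (∫ t in A..B, (fun t => g t * ((Real.sqrt (B - A))⁻¹ * (Set.Ioc A B).indicator 1 t)) t) = _
  rw [hrw, intervalIntegral.integral_const_mul]
  congr 1
  rw [intervalIntegral.integral_of_le (by linarith : A ≤ B),
    intervalIntegral.integral_of_le (by linarith : A ≤ B),
    MeasureTheory.setIntegral_indicator measurableSet_Ioc, Set.inter_self]

lemma haarC_eq (h : 0 < B - A) (hgc : Continuous g) {j k : ℕ} (hk1 : 1 ≤ k) (hk2 : k ≤ 2 ^ j) :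
    haarC A B j k g = (Real.sqrt (B - A))⁻¹ * Real.sqrt (2 ^ j) *
      ((∫ t in haarPt A B j (k - 1)..haarPt A B (j + 1) (2 * k - 1), g t)
        - ∫ t in haarPt A B (j + 1) (2 * k - 1)..haarPt A B j k, g t) := by
  unfold haarC haarH
  set c := (Real.sqrt (B - A))⁻¹ * Real.sqrt (2 ^ j) with hc
  set I1 := haarI A B (j + 1) (2 * k - 1) with hI1
  set I2 := haarI A B (j + 1) (2 * k) with hI2
  have hrw : (fun t => g t * (c * (I1.indicator 1 t - I2.indicator 1 t)))
      = fun t => c * (I1.indicator g t - I2.indicator g t) := by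
    funext t
    by_cases h1 : t ∈ I1 <;> by_cases h2 : t ∈ I2 <;> simp [h1, h2] <;> ring
  show (∫ t in A..B, (fun t => g t * (c * (I1.indicator 1 t - I2.indicator 1 t))) t) = _
  rw [hrw, intervalIntegral.integral_const_mul]
  congr 1
  have hint : IntegrableOn g (Set.Ioc A B) := hgc.integrableOn_Ioc
  rw [intervalIntegral.integral_of_le (by linarith : A ≤ B)]
  have hi1 : Integrable (I1.indicator g) (volume.restrict (Set.Ioc A B)) :=
    hint.indicator (measurableSet_haarI _ _)
  have hi2 : Integrable (I2.indicator g) (volume.restrict (Set.Ioc A B)) :=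
    hint.indicator (measurableSet_haarI _ _)
  rw [MeasureTheory.integral_sub hi1 hi2]
  have e1 := integral_over (A := A) (B := B) hgc h
    (j := j + 1) (k := 2 * k - 1) (by rw [pow_succ]; omega)
  have e2 := integral_over (A := A) (B := B) hgc h
    (j := j + 1) (k := 2 * k) (by rw [pow_succ]; omega)
  rw [e1, e2, show 2 * k - 1 - 1 = 2 * (k - 1) from by omega, haarPt_double,
    show 2 * k - 1 = 2 * k - 1 from rfl, haarPt_double]

-- pointwise values
lemma haarH_left (h : 0 < B - A) {j k : ℕ} {x : ℝ} (hk1 : 1 ≤ k)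
    (hx : x ∈ haarI A B (j + 1) (2 * k - 1)) :
    haarH A B j k x = (Real.sqrt (B - A))⁻¹ * Real.sqrt (2 ^ j) := by
  have hx2 : x ∉ haarI A B (j + 1) (2 * k) := fun hm => by
    have := haarI_unique h (show 1 ≤ 2*k-1 by omega) (show 1 ≤ 2*k by omega) hx hm
    omega
  unfold haarH
  rw [Set.indicator_of_mem hx, Set.indicator_of_notMem hx2]
  simp

lemma haarH_right (h : 0 < B - A) {j k : ℕ} {x : ℝ} (hk1 : 1 ≤ k)
    (hx : x ∈ haarI A B (j + 1) (2 * k)) :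
    haarH A B j k x = -((Real.sqrt (B - A))⁻¹ * Real.sqrt (2 ^ j)) := by
  have hx2 : x ∉ haarI A B (j + 1) (2 * k - 1) := fun hm => by
    have := haarI_unique h (show 1 ≤ 2*k-1 by omega) (show 1 ≤ 2*k by omega) hm hx
    omega
  unfold haarH
  rw [Set.indicator_of_mem hx, Set.indicator_of_notMem hx2]
  simp

lemma haarH_zero (h : 0 < B - A) {j k K : ℕ} {x : ℝ} (hk1 : 1 ≤ k) (hK1 : 1 ≤ K)
    (hne : k ≠ K) (hx : x ∈ haarI A B j K) : haarH A B j k x = 0 := by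
  have hs := haarI_split (A := A) (B := B) h j hk1
  have h1 : x ∉ haarI A B (j + 1) (2 * k - 1) := fun hm =>
    hne (haarI_unique h hk1 hK1 (hs ▸ Set.mem_union_left _ hm) hx)
  have h2 : x ∉ haarI A B (j + 1) (2 * k) := fun hm =>
    hne (haarI_unique h hk1 hK1 (hs ▸ Set.mem_union_right _ hm) hx)
  unfold haarH
  rw [Set.indicator_of_notMem h1, Set.indicator_of_notMem h2]
  simp

lemma level_sum (h : 0 < B - A) {n K : ℕ} (hK1 : 1 ≤ K) (hK2 : K ≤ 2 ^ n) {x : ℝ}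
    (hx : x ∈ haarI A B n K) :
    ∑ k ∈ Finset.Icc 1 (2 ^ n), haarC A B n k g * haarH A B n k x
      = haarC A B n K g * haarH A B n K x := by
  apply Finset.sum_eq_single_of_mem K (Finset.mem_Icc.mpr ⟨hK1, hK2⟩)
  intro k hk hne
  rw [haarH_zero h (Finset.mem_Icc.mp hk).1 hK1 hne hx, mul_zero]

-- main telescoping identity
lemma haar_partial_sum (h : 0 < B - A) (hgc : Continuous g) (n : ℕ) :
    ∀ K, 1 ≤ K → K ≤ 2 ^ n → ∀ x ∈ haarI A B n K,
      haarC0 A B g * haarH0 A B x +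
        ∑ j ∈ Finset.range n, ∑ k ∈ Finset.Icc 1 (2 ^ j),
          haarC A B j k g * haarH A B j k x
      = 2 ^ n / (B - A) * ∫ t in haarPt A B n (K - 1)..haarPt A B n K, g t := by
  have hsq : (Real.sqrt (B - A))⁻¹ * (Real.sqrt (B - A))⁻¹ = (B - A)⁻¹ := by
    rw [← mul_inv, Real.mul_self_sqrt h.le]
  induction n with
  | zero =>
    intro K hK1 hK2 x hx
    interval_cases K
    have hxab : x ∈ Set.Ioc A B := by rwa [haarI_zero_one] at hx
    rw [haarC0_eq h hgc]
    unfold haarH0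
    rw [haarI_zero_one, Set.indicator_of_mem hxab]
    simp only [Finset.range_zero, Finset.sum_empty, add_zero, Pi.one_apply, mul_one]
    rw [show haarPt A B 0 (1 - 1) = A from haarPt_zero 0,
      show haarPt A B 0 1 = B from by simpa using haarPt_top (A := A) (B := B) 0]
    linear_combination (∫ t in A..B, g t) * hsq
  | succ n ih =>
    intro K hK1 hK2 x hx
    -- parent index
    set P := (K + 1) / 2 with hP
    have hP1 : 1 ≤ P := by omega
    have hP2 : P ≤ 2 ^ n := by
      have : 2 ^ (n + 1) = 2 * 2 ^ n := by ring
      omega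
    have hKP : K = 2 * P - 1 ∨ K = 2 * P := by omega
    have hxP : x ∈ haarI A B n P := by
      rw [haarI_split h n hP1]
      rcases hKP with hK | hK
      · exact Set.mem_union_left _ (hK ▸ hx)
      · exact Set.mem_union_right _ (hK ▸ hx)
    have hIH := ih P hP1 hP2 x hxP
    rw [Finset.sum_range_succ, ← add_assoc, hIH, level_sum h hP1 hP2 hxP]
    -- now pure computation
    set m := haarPt A B (n + 1) (2 * P - 1) with hm
    set a := haarPt A B n (P - 1) with ha
    set b := haarPt A B n P with hb
    have hC := haarC_eq (g := g) h hgc hP1 hP2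
    rw [← ha, ← hm, ← hb] at hC
    have key : ((Real.sqrt (B - A))⁻¹ * Real.sqrt (2 ^ n))
        * ((Real.sqrt (B - A))⁻¹ * Real.sqrt (2 ^ n)) = 2 ^ n / (B - A) := by
      rw [mul_mul_mul_comm, ← mul_inv, Real.mul_self_sqrt h.le,
        Real.mul_self_sqrt (by positivity : (0:ℝ) ≤ 2 ^ n)]
      exact (div_eq_inv_mul _ _).symm
    have hsq2 : Real.sqrt (2 ^ n) * Real.sqrt (2 ^ n) = 2 ^ n :=
      Real.mul_self_sqrt (by positivity)
    rcases hKP with hK | hK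
    · -- x in left child
      have hH := haarH_left h hP1 (hK ▸ hx)
      rw [hC, hH]
      have hend1 : haarPt A B (n + 1) (K - 1) = a := by
        rw [hK, ha, show 2 * P - 1 - 1 = 2 * (P - 1) from by omega, haarPt_double]
      have hend2 : haarPt A B (n + 1) K = m := by rw [hK, hm]
      rw [hend1, hend2]
      -- need integral split: ∫ a..b = ∫ a..m + ∫ m..b
      have hsplit : (∫ t in a..b, g t) = (∫ t in a..m, g t) + ∫ t in m..b, g t := by
        rw [intervalIntegral.integral_add_adjacent_intervals
          (hgc.intervalIntegrable _ _) (hgc.intervalIntegrable _ _)]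
      rw [hsplit]
      linear_combination ((∫ t in a..m, g t) - ∫ t in m..b, g t) * key
    · -- x in right child
      have hH := haarH_right h hP1 (hK ▸ hx)
      rw [hC, hH]
      have hend1 : haarPt A B (n + 1) (K - 1) = m := by
        rw [hK]
      have hend2 : haarPt A B (n + 1) K = b := by rw [hK, hb, haarPt_double]
      rw [hend1, hend2]
      have hsplit : (∫ t in a..b, g t) = (∫ t in a..m, g t) + ∫ t in m..b, g t := by
        rw [intervalIntegral.integral_add_adjacent_intervals
          (hgc.intervalIntegrable _ _) (hgc.intervalIntegrable _ _)]
      rw [hsplit]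
      linear_combination ((∫ t in m..b, g t) - ∫ t in a..m, g t) * key

lemma avg_bound (hgc : Continuous g) {a b x C : ℝ} (hab : a < b) (hx : x ∈ Set.Ioc a b)
    (hC : 0 ≤ C) (hLip : ∀ y z : ℝ, |g y - g z| ≤ C * |y - z|) :
    |g x - (b - a)⁻¹ * ∫ t in a..b, g t| ≤ C * (b - a) / 2 := by
  have hba : 0 < b - a := by linarith
  have hxa : a ≤ x := le_of_lt hx.1
  have hxb : x ≤ b := hx.2
  have h1 : g x - (b - a)⁻¹ * ∫ t in a..b, g t
      = (b - a)⁻¹ * ∫ t in a..b, (g x - g t) := by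
    rw [intervalIntegral.integral_sub intervalIntegrable_const
      (hgc.intervalIntegrable _ _), intervalIntegral.integral_const, smul_eq_mul]
    field_simp
  rw [h1, abs_mul, abs_inv, abs_of_pos hba]
  have habs : Continuous fun t : ℝ => |x - t| :=
    Continuous.abs (continuous_const.sub continuous_id)
  have hci : Continuous fun t : ℝ => C * |x - t| := continuous_const.mul habs
  have h2 : |∫ t in a..b, (g x - g t)| ≤ ∫ t in a..b, C * |x - t| := by
    calc |∫ t in a..b, (g x - g t)| ≤ ∫ t in a..b, |g x - g t| :=
          intervalIntegral.abs_integral_le_integral_abs hab.le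
      _ ≤ ∫ t in a..b, C * |x - t| := by
          apply intervalIntegral.integral_mono_on hab.le
            ((continuous_const.sub hgc).abs.intervalIntegrable _ _)
            (hci.intervalIntegrable _ _)
          intro t _
          exact hLip x t
  have e1 : (∫ t in a..x, |x - t|) = (x - a) ^ 2 / 2 := by
    rw [intervalIntegral.integral_congr (g := fun t => x - t)]
    · rw [intervalIntegral.integral_sub intervalIntegrable_const
        intervalIntegral.intervalIntegrable_id, intervalIntegral.integral_const,
        integral_id, smul_eq_mul]
      ring
    · intro t ht
      rw [Set.uIcc_of_le hxa] at ht
      show |x - t| = x - t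
      exact abs_of_nonneg (by linarith [ht.2])
  have e2 : (∫ t in x..b, |x - t|) = (b - x) ^ 2 / 2 := by
    rw [intervalIntegral.integral_congr (g := fun t => t - x)]
    · rw [intervalIntegral.integral_sub intervalIntegral.intervalIntegrable_id
        intervalIntegrable_const, intervalIntegral.integral_const,
        integral_id, smul_eq_mul]
      ring
    · intro t ht
      rw [Set.uIcc_of_le hxb] at ht
      show |x - t| = t - x
      rw [abs_sub_comm]
      exact abs_of_nonneg (by linarith [ht.1])
  have h3 : (∫ t in a..b, C * |x - t|)
      = C * ((x - a) ^ 2 / 2 + (b - x) ^ 2 / 2) := by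
    rw [intervalIntegral.integral_const_mul]
    congr 1
    rw [← intervalIntegral.integral_add_adjacent_intervals
      (a := a) (b := x) (c := b)
      (habs.intervalIntegrable _ _) (habs.intervalIntegrable _ _)]
    rw [e1, e2]
  have h4 : C * ((x - a) ^ 2 / 2 + (b - x) ^ 2 / 2) ≤ C * ((b - a) ^ 2 / 2) := by
    apply mul_le_mul_of_nonneg_left _ hC
    nlinarith [mul_nonneg (sub_nonneg.mpr hxa) (sub_nonneg.mpr hxb)]
  calc (b - a)⁻¹ * |∫ t in a..b, (g x - g t)|
      ≤ (b - a)⁻¹ * (C * ((b - a) ^ 2 / 2)) := by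
        apply mul_le_mul_of_nonneg_left _ (inv_nonneg.mpr hba.le)
        exact le_trans h2 (h3 ▸ h4)
    _ = C * (b - a) / 2 := by field_simp


/-- The truncated Haar series approximates `g` up to `(B - A) 2^{-j* - 2} ‖g'‖_∞`
on `(A, B]` (Lemma 5.3(iii) of Grama–Neumann). -/
theorem haar_truncation_error (A B : ℝ) (hAB : A < B) (g : ℝ → ℝ)
    (hg : ContDiff ℝ 1 g)
    (hg'_bdd : BddAbove (Set.range fun x => |deriv g x|))
    (jstar : ℕ) (x : ℝ) (hx : x ∈ Set.Ioc A B) :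
    |g x - (haarC0 A B g * haarH0 A B x +
        ∑ j ∈ Finset.range (jstar + 1), ∑ k ∈ Finset.Icc 1 (2 ^ j),
          haarC A B j k g * haarH A B j k x)|
      ≤ (B - A) * ((2 : ℝ) ^ (jstar + 2))⁻¹ * ⨆ y, |deriv g y| := by
  have hL : 0 < B - A := by linarith
  set C := ⨆ y, |deriv g y| with hCdef
  have hd : ∀ y, |deriv g y| ≤ C := fun y => le_ciSup hg'_bdd y
  have hC0 : 0 ≤ C := le_trans (abs_nonneg _) (hd 0)
  have hLip : ∀ y z : ℝ, |g y - g z| ≤ C * |y - z| := by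
    intro y z
    have := Convex.norm_image_sub_le_of_norm_deriv_le (f := g)
      (fun u _ => (hg.differentiable one_ne_zero) u)
      (fun u _ => by simpa using hd u) convex_univ (Set.mem_univ z) (Set.mem_univ y)
    simpa [Real.norm_eq_abs] using this
  obtain ⟨K, hK1, hK2, hxK⟩ := haar_exists hL hx (jstar + 1)
  rw [haar_partial_sum hL hg.continuous (jstar + 1) K hK1 hK2 x hxK]
  set a := haarPt A B (jstar + 1) (K - 1) with ha
  set b := haarPt A B (jstar + 1) K with hb
  have hba : b - a = (B - A) / 2 ^ (jstar + 1) := by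
    rw [ha, hb]
    unfold haarPt
    have hcast : ((K - 1 : ℕ) : ℝ) = (K : ℝ) - 1 := by
      rw [Nat.cast_sub hK1]; norm_num
    rw [hcast]
    ring
  have hab : a < b := by
    have : (0:ℝ) < (B - A) / 2 ^ (jstar + 1) := by positivity
    linarith [hba ▸ this]
  have h2 : (2:ℝ) ^ (jstar + 1) / (B - A) = (b - a)⁻¹ := by
    rw [hba, inv_div]
  rw [h2]
  have hbnd := avg_bound hg.continuous hab hxK hC0 hLip
  refine le_trans hbnd (le_of_eq ?_)
  rw [hba]
  have h3 : ((2:ℝ) ^ (jstar + 2))⁻¹ = ((2:ℝ) ^ (jstar + 1))⁻¹ / 2 := by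
    rw [pow_succ]
    ring
  rw [h3]
  field_simp
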